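/- Let N ≥ 3 and let |ψ⟩ be an entangled N-qubit pure state. If |ψ⟩ is fragile with respect to the loss of the k-th qubit, i.e., the reduced density operator ρ_{¬k}(ψ) is separable, then ρ_{¬k}(ψ) has rank exactly 2. -/

import Mathlib

open scoped BigOperators ComplexConjugate

noncomputable section

/-- A single-qubit unit vector in `ℂ²`. -/
def IsUnitQubit (e : Fin 2 → ℂ) : Prop := ∑ j, Complex.normSq (e j) = 1

/-- Norm-one condition for a multiqubit vector on the register `ι`. -/
def IsUnitState {ι : Type*} [Fintype ι] [DecidableEq ι] (ψ : (ι → Fin 2) → ℂ) : Prop :=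
  ∑ x, Complex.normSq (ψ x) = 1

/-- The product state `⊗ᵢ eᵢ`. -/
def prodState {ι : Type*} [Fintype ι] (e : ι → Fin 2 → ℂ) : (ι → Fin 2) → ℂ :=
  fun x => ∏ i, e i (x i)

/-- A pure state is a product state if it is a tensor product of single-qubit unit vectors. -/
def IsProductState {ι : Type*} [Fintype ι] (ψ : (ι → Fin 2) → ℂ) : Prop :=
  ∃ e : ι → Fin 2 → ℂ, (∀ i, IsUnitQubit (e i)) ∧ ψ = prodState e

/-- A pure state is entangled if it is not a product state. -/
def IsEntangledState {ι : Type*} [Fintype ι] (ψ : (ι → Fin 2) → ℂ) : Prop :=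
  ¬ IsProductState ψ

/-- The projector `|v⟩⟨v|` as a matrix. -/
def proj {α : Type*} (v : α → ℂ) : Matrix α α ℂ :=
  Matrix.of fun x y => v x * conj (v y)

/-- A density matrix on the qubit register `ι` is separable if it is a finite convex
combination of projectors onto product states (and entangled otherwise). -/
def IsSeparableDensity {ι : Type*} [Fintype ι] (ρ : Matrix (ι → Fin 2) (ι → Fin 2) ℂ) : Prop :=
  ∃ (n : ℕ) (w : Fin n → ℝ) (e : Fin n → ι → Fin 2 → ℂ),
    (∀ m, 0 ≤ w m) ∧ (∑ m, w m = 1) ∧ (∀ m i, IsUnitQubit (e m i)) ∧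
    ρ = ∑ m, (w m : ℂ) • proj (prodState (e m))

/-- Assemble a full assignment of the `N` qubits from an assignment `x` of the qubits outside
`S` and an assignment `z` of the qubits in `S`. -/
def mergeCompl {N : ℕ} (S : Finset (Fin N)) (x : {i : Fin N // i ∉ S} → Fin 2)
    (z : {i : Fin N // i ∈ S} → Fin 2) : Fin N → Fin 2 :=
  fun i => if h : i ∈ S then z ⟨i, h⟩ else x ⟨i, h⟩

/-- The reduced density operator `ρ_{¬S}(ψ)`: the partial trace of `|ψ⟩⟨ψ|` over the qubits
in `S`. -/
def reducedState {N : ℕ} (ψ : (Fin N → Fin 2) → ℂ) (S : Finset (Fin N)) :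
    Matrix ({i : Fin N // i ∉ S} → Fin 2) ({i : Fin N // i ∉ S} → Fin 2) ℂ :=
  Matrix.of fun x y => ∑ z : {i : Fin N // i ∈ S} → Fin 2,
    ψ (mergeCompl S x z) * conj (ψ (mergeCompl S y z))

namespace FragileAux

open Complex Finset

variable {α : Type*} [Fintype α]

/-- The hermitian dot product `⟨b, a⟩ = ∑ conj (b x) * a x`. -/
def dotc (b a : α → ℂ) : ℂ := ∑ x, conj (b x) * a x

/-- The quadratic form `aᴴ ρ a`. -/
def quadForm (ρ : Matrix α α ℂ) (a : α → ℂ) : ℂ := ∑ x, ∑ y, conj (a x) * ρ x y * a y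

lemma conj_dotc (b a : α → ℂ) : conj (dotc b a) = dotc a b := by
  simp [dotc, map_sum, mul_comm]

lemma dotc_self (a : α → ℂ) : dotc a a = ((∑ x, normSq (a x) : ℝ) : ℂ) := by
  simp [dotc, Complex.normSq_eq_conj_mul_self]

lemma dotc_sub_right (b a₁ a₂ : α → ℂ) :
    dotc b (fun x => a₁ x - a₂ x) = dotc b a₁ - dotc b a₂ := by
  simp [dotc, mul_sub, Finset.sum_sub_distrib]

lemma dotc_smul_right (b a : α → ℂ) (c : ℂ) :
    dotc b (fun x => c * a x) = c * dotc b a := by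
  simp [dotc, Finset.mul_sum]; exact Finset.sum_congr rfl fun x _ => by ring

lemma dotc_sub_left (b₁ b₂ a : α → ℂ) :
    dotc (fun x => b₁ x - b₂ x) a = dotc b₁ a - dotc b₂ a := by
  simp [dotc, sub_mul, Finset.sum_sub_distrib]

lemma dotc_smul_left (b a : α → ℂ) (c : ℂ) :
    dotc (fun x => c * b x) a = conj c * dotc b a := by
  simp [dotc, Finset.mul_sum]; exact Finset.sum_congr rfl fun x _ => by ring

lemma dotc_delta (b : α → ℂ) [DecidableEq α] (x' : α) :
    dotc b (fun x => if x = x' then (1:ℂ) else 0) = conj (b x') := by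
  simp [dotc]

lemma quadForm_proj (u a : α → ℂ) :
    quadForm (proj u) a = ((normSq (dotc u a) : ℝ) : ℂ) := by
  have h1 : quadForm (proj u) a = (∑ x, conj (a x) * u x) * ∑ y, conj (u y) * a y := by
    rw [Finset.sum_mul_sum]
    refine Finset.sum_congr rfl fun x _ => Finset.sum_congr rfl fun y _ => ?_
    simp only [proj, Matrix.of_apply]; ring
  have h2 : (∑ x, conj (a x) * u x) = conj (dotc u a) := by
    simp [dotc, map_sum, mul_comm]
  rw [h1, h2, show (∑ y, conj (u y) * a y) = dotc u a from rfl,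
    ← Complex.normSq_eq_conj_mul_self]

lemma quadForm_sum {n : ℕ} (c : Fin n → ℂ) (ρ : Fin n → Matrix α α ℂ) (a : α → ℂ) :
    quadForm (∑ m, c m • ρ m) a = ∑ m, c m * quadForm (ρ m) a := by
  have h1 : ∀ x y, conj (a x) * (∑ m, c m • ρ m) x y * a y
      = ∑ m, c m * (conj (a x) * ρ m x y * a y) := by
    intro x y
    simp only [Matrix.sum_apply, Matrix.smul_apply, smul_eq_mul, Finset.sum_mul, Finset.mul_sum]
    exact Finset.sum_congr rfl fun m _ => by ring
  simp only [quadForm, h1, Finset.mul_sum]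
  rw [show (∑ m, ∑ x, ∑ y, c m * (conj (a x) * ρ m x y * a y))
      = ∑ x, ∑ m, ∑ y, c m * (conj (a x) * ρ m x y * a y) from Finset.sum_comm]
  exact Finset.sum_congr rfl fun x _ => Finset.sum_comm


open Complex Finset

/-- Sum over merged assignments equals sum over all assignments. -/
lemma sum_merge {N : ℕ} (S : Finset (Fin N)) {M : Type*} [AddCommMonoid M]
    (F : (Fin N → Fin 2) → M) :
    ∑ z : {i : Fin N // i ∈ S} → Fin 2, ∑ x : {i : Fin N // i ∉ S} → Fin 2,
      F (mergeCompl S x z) = ∑ w, F w := by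
  have h := Fintype.sum_equiv
    (Equiv.piEquivPiSubtypeProd (fun i => i ∈ S) (fun _ => Fin 2)).symm
    (fun p => F (mergeCompl S p.2 p.1)) F (fun p => rfl)
  exact (Fintype.sum_prod_type (f := fun p => F (mergeCompl S p.2 p.1))).symm.trans h

/-- A product of unit qubits is a unit vector. -/
lemma sum_normSq_prodState {ι : Type*} [Fintype ι] [DecidableEq ι] (e : ι → Fin 2 → ℂ)
    (h : ∀ i, IsUnitQubit (e i)) : ∑ x, normSq (prodState e x) = 1 := by
  classical
  calc ∑ x, normSq (prodState e x) = ∑ x : ι → Fin 2, ∏ i, normSq (e i (x i)) := by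
        refine Finset.sum_congr rfl fun x _ => ?_
        simpa [prodState] using map_prod Complex.normSq (fun i => e i (x i)) Finset.univ
    _ = ∏ i, ∑ j, normSq (e i j) := by
        rw [Finset.prod_univ_sum]
        simp [Fintype.piFinset_univ]
    _ = 1 := Finset.prod_eq_one fun i _ => h i

lemma quadForm_reduced {N : ℕ} (ψ : (Fin N → Fin 2) → ℂ) (S : Finset (Fin N))
    (a : ({i : Fin N // i ∉ S} → Fin 2) → ℂ) :
    quadForm (reducedState ψ S) a
      = ∑ z : {i : Fin N // i ∈ S} → Fin 2,
          ((normSq (dotc (fun x => ψ (mergeCompl S x z)) a) : ℝ) : ℂ) := by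
  have h1 : ∀ x y, conj (a x) * (reducedState ψ S) x y * a y
      = ∑ z, (conj (a x) * ψ (mergeCompl S x z)) * (conj (ψ (mergeCompl S y z)) * a y) := by
    intro x y
    simp only [reducedState, Matrix.of_apply, Finset.sum_mul, Finset.mul_sum]
    exact Finset.sum_congr rfl fun z _ => by ring
  simp only [quadForm, h1]
  rw [show (∑ x, ∑ y, ∑ z, (conj (a x) * ψ (mergeCompl S x z))
        * (conj (ψ (mergeCompl S y z)) * a y))
      = ∑ z, ∑ x, ∑ y, (conj (a x) * ψ (mergeCompl S x z))
        * (conj (ψ (mergeCompl S y z)) * a y) from by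
    rw [show (∑ x, ∑ y, ∑ z, (conj (a x) * ψ (mergeCompl S x z))
          * (conj (ψ (mergeCompl S y z)) * a y))
        = ∑ x, ∑ z, ∑ y, (conj (a x) * ψ (mergeCompl S x z))
          * (conj (ψ (mergeCompl S y z)) * a y) from
      Finset.sum_congr rfl fun x _ => Finset.sum_comm]
    exact Finset.sum_comm]
  refine Finset.sum_congr rfl fun z _ => ?_
  rw [← Finset.sum_mul_sum]
  have h2 : (∑ x, conj (a x) * ψ (mergeCompl S x z))
      = conj (dotc (fun x => ψ (mergeCompl S x z)) a) := by
    simp [dotc, map_sum, mul_comm]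
  rw [h2, show (∑ y, conj (ψ (mergeCompl S y z)) * a y)
      = dotc (fun x => ψ (mergeCompl S x z)) a from rfl,
    ← Complex.normSq_eq_conj_mul_self]


/-- A hermitian matrix of trace one and rank at most one is a projector onto a unit vector. -/
lemma rank_le_one_eq_proj {α : Type*} [Fintype α] [DecidableEq α]
    (ρ : Matrix α α ℂ) (hherm : ∀ x y, ρ y x = conj (ρ x y))
    (htr : ∑ x, ρ x x = 1) (hr : ρ.rank ≤ 1) :
    ∃ φ : α → ℂ, (∑ x, normSq (φ x) = 1) ∧ ρ = proj φ := by
  classical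
  rw [Matrix.rank_eq_finrank_span_cols] at hr
  obtain ⟨v, hv⟩ := ((Submodule.finrank_le_one_iff_isPrincipal _).mp hr).principal
  have hcol : ∀ y, ∃ c : ℂ, ∀ x, ρ x y = c * v x := by
    intro y
    have hmem : ρ.col y ∈ Submodule.span ℂ (Set.range ρ.col) :=
      Submodule.subset_span (Set.mem_range_self y)
    rw [hv, Submodule.mem_span_singleton] at hmem
    obtain ⟨c, hc⟩ := hmem
    exact ⟨c, fun x => by
      have := congrFun hc x
      simpa [Matrix.transpose_apply, eq_comm] using this⟩
  choose c hc using hcol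
  have hne : ∃ x y, ρ x y ≠ 0 := by
    by_contra h
    push_neg at h
    simp only [h, Finset.sum_const_zero] at htr
    exact zero_ne_one htr
  obtain ⟨x0, y0, h00⟩ := hne
  have hv0 : v x0 ≠ 0 := fun h => h00 (by rw [hc y0 x0, h, mul_zero])
  have hcy : ∀ y, c y = (conj (c x0) / v x0) * conj (v y) := by
    intro y
    have h1 : c y * v x0 = conj (c x0) * conj (v y) := by
      have h2 := hherm y x0
      rw [hc y x0, hc x0 y, map_mul] at h2
      exact h2
    field_simp
    linear_combination h1
  have hform : ∀ x y, ρ x y = (conj (c x0) / v x0) * (v x * conj (v y)) := by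
    intro x y
    rw [hc y x, hcy y]; ring
  set t : ℂ := conj (c x0) / v x0 with ht
  set r0 : ℝ := ∑ x, normSq (v x) with hr0
  have hr0pos : 0 < r0 := by
    refine Finset.sum_pos' (fun x _ => normSq_nonneg _) ⟨x0, Finset.mem_univ _, ?_⟩
    exact (normSq_pos).mpr hv0
  have htraceform : t * (r0 : ℂ) = 1 := by
    rw [← htr]
    rw [show (∑ x, ρ x x) = ∑ x, t * (v x * conj (v x)) from
      Finset.sum_congr rfl fun x _ => hform x x]
    rw [← Finset.mul_sum]
    congr 1
    rw [hr0]
    push_cast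
    exact Finset.sum_congr rfl fun x _ => (Complex.mul_conj _).symm
  have htval : t = ((r0⁻¹ : ℝ) : ℂ) := by
    have hr0ne : ((r0 : ℝ) : ℂ) ≠ 0 := by exact_mod_cast hr0pos.ne'
    push_cast
    field_simp
    linear_combination htraceform
  refine ⟨fun x => ((Real.sqrt r0⁻¹ : ℝ) : ℂ) * v x, ?_, ?_⟩
  · have : ∀ x, normSq (((Real.sqrt r0⁻¹ : ℝ) : ℂ) * v x) = r0⁻¹ * normSq (v x) := by
      intro x
      rw [normSq_mul, Complex.normSq_ofReal, Real.mul_self_sqrt (by positivity)]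
    rw [Finset.sum_congr rfl fun x _ => this x, ← Finset.mul_sum, ← hr0]
    exact inv_mul_cancel₀ hr0pos.ne'
  · ext x y
    rw [hform x y]
    simp only [proj, Matrix.of_apply]
    rw [map_mul, Complex.conj_ofReal]
    rw [htval]
    rw [show ((Real.sqrt r0⁻¹ : ℝ) : ℂ) * v x * (((Real.sqrt r0⁻¹ : ℝ) : ℂ) * conj (v y))
        = (((Real.sqrt r0⁻¹ * Real.sqrt r0⁻¹ : ℝ) : ℂ)) * (v x * conj (v y)) from by
      push_cast; ring]
    rw [Real.mul_self_sqrt (by positivity)]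


lemma sum_cast_nonneg_eq_zero {β : Type*} [Fintype β] (f : β → ℝ) (hf : ∀ m, 0 ≤ f m)
    (h : (∑ m, ((f m : ℝ) : ℂ)) = 0) : ∀ m, f m = 0 := by
  rw [← Complex.ofReal_sum, Complex.ofReal_eq_zero] at h
  intro m
  exact (Finset.sum_eq_zero_iff_of_nonneg (fun m _ => hf m)).mp h m (Finset.mem_univ m)

/-- A separable pure density matrix is a projector onto a product state. -/
lemma sep_pure_is_prod {ι : Type*} [Fintype ι] [DecidableEq ι]
    (ρ : Matrix (ι → Fin 2) (ι → Fin 2) ℂ)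
    (hsep : IsSeparableDensity ρ) (φ : (ι → Fin 2) → ℂ) (hφn : ∑ x, normSq (φ x) = 1)
    (hρ : ρ = proj φ) :
    ∃ e : ι → Fin 2 → ℂ, (∀ i, IsUnitQubit (e i)) ∧ ρ = proj (prodState e) := by
  obtain ⟨n, w, e, hw, hsum, hq, heq⟩ := hsep
  have hm0 : ∃ m0, 0 < w m0 := by
    by_contra h
    push_neg at h
    have hz : ∀ m, w m = 0 := fun m => le_antisymm (h m) (hw m)
    rw [Finset.sum_congr rfl (fun m _ => hz m)] at hsum
    simp at hsum
  obtain ⟨m0, hm0⟩ := hm0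
  set u := prodState (e m0) with hu
  have hun : ∑ x, normSq (u x) = 1 := sum_normSq_prodState _ (hq m0)
  set s := dotc φ u with hs
  have hφφ : dotc φ φ = 1 := by rw [dotc_self, hφn]; norm_num
  have huu : dotc u u = 1 := by rw [dotc_self, hun]; norm_num
  have hR : ∀ b, dotc b (fun x => u x - s * φ x) = dotc b u - s * dotc b φ := fun b => by
    rw [dotc_sub_right, dotc_smul_right]
  have hL : ∀ b, dotc (fun x => u x - s * φ x) b = dotc u b - conj s * dotc φ b := fun b => by
    rw [dotc_sub_left, dotc_smul_left]
  have hφa : dotc φ (fun x => u x - s * φ x) = 0 := by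
    rw [hR, hφφ, mul_one, ← hs, sub_self]
  have hQ : ∑ m, ((w m * normSq (dotc (prodState (e m)) (fun x => u x - s * φ x)) : ℝ) : ℂ)
      = 0 := by
    have h1 : quadForm ρ (fun x => u x - s * φ x) = 0 := by
      rw [hρ, quadForm_proj, hφa]; simp
    rw [heq, quadForm_sum] at h1
    rw [← h1]
    refine Finset.sum_congr rfl fun m _ => ?_
    rw [quadForm_proj]; push_cast; ring
  have hz := sum_cast_nonneg_eq_zero _
    (fun m => mul_nonneg (hw m) (normSq_nonneg _)) hQ m0
  have hua : dotc u (fun x => u x - s * φ x) = 0 := by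
    rcases mul_eq_zero.mp hz with h | h
    · exact absurd h hm0.ne'
    · rw [← hu] at h
      exact normSq_eq_zero.mp h
  have hns : s * conj s = 1 := by
    have h1 : dotc u (fun x => u x - s * φ x) = 1 - s * conj s := by
      rw [hR, huu, ← conj_dotc φ u, ← hs]
    rw [h1] at hua
    linear_combination -hua
  have haa : ∀ x, u x = s * φ x := by
    have h1 : dotc (fun x => u x - s * φ x) (fun x => u x - s * φ x) = 0 := by
      rw [hL, hua, hφa, mul_zero, sub_zero]
    rw [dotc_self, Complex.ofReal_eq_zero] at h1
    intro x
    have h2 := (Finset.sum_eq_zero_iff_of_nonneg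
      (fun x _ => normSq_nonneg _)).mp h1 x (Finset.mem_univ x)
    exact sub_eq_zero.mp (normSq_eq_zero.mp h2)
  refine ⟨e m0, hq m0, ?_⟩
  rw [hρ]
  ext x y
  simp only [proj, Matrix.of_apply, ← hu]
  rw [haa x, haa y, map_mul]
  linear_combination (-(φ x * conj (φ y))) * hns


/-- If the reduced state is the projector onto a unit vector `u`, then `ψ` factorizes. -/
lemma reduced_factor {N : ℕ} (ψ : (Fin N → Fin 2) → ℂ) (S : Finset (Fin N))
    (u : ({i : Fin N // i ∉ S} → Fin 2) → ℂ) (hun : ∑ x, normSq (u x) = 1)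
    (hρ : reducedState ψ S = proj u) :
    ∀ (z : {i : Fin N // i ∈ S} → Fin 2) x, ψ (mergeCompl S x z)
      = conj (dotc (fun x' => ψ (mergeCompl S x' z)) u) * u x := by
  intro z x'
  classical
  have huu : dotc u u = 1 := by rw [dotc_self, hun]; norm_num
  set a : ({i : Fin N // i ∉ S} → Fin 2) → ℂ :=
    fun x => (if x = x' then (1:ℂ) else 0) - conj (u x') * u x with ha
  have hexp : ∀ b, dotc b a = conj (b x') - conj (u x') * dotc b u := by
    intro b
    rw [ha, dotc_sub_right, dotc_smul_right, dotc_delta]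
  have hua : dotc u a = 0 := by
    rw [hexp, huu, mul_one, sub_self]
  have hQ : ∑ zz : {i : Fin N // i ∈ S} → Fin 2,
      ((normSq (dotc (fun x => ψ (mergeCompl S x zz)) a) : ℝ) : ℂ) = 0 := by
    rw [← quadForm_reduced, hρ, quadForm_proj, hua]
    simp
  have hz := sum_cast_nonneg_eq_zero _ (fun zz => normSq_nonneg _) hQ z
  have h1 : dotc (fun x => ψ (mergeCompl S x z)) a = 0 := normSq_eq_zero.mp hz
  rw [hexp] at h1
  have h2 : conj (ψ (mergeCompl S x' z))
      = conj (u x') * dotc (fun x => ψ (mergeCompl S x z)) u := by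
    linear_combination h1
  have h3 := congrArg (starRingEnd ℂ) h2
  rw [Complex.conj_conj, map_mul, Complex.conj_conj] at h3
  rw [h3, conj_dotc]
  ring_nf

end FragileAux

open scoped ComplexOrder
open FragileAux Complex

/-- If an entangled `N`-qubit pure state (`N ≥ 3`) is fragile with respect to
the loss of the `k`-th qubit (i.e. `ρ_{¬k}(ψ)` is separable), then `ρ_{¬k}(ψ)` has rank 2. -/
theorem fragile_implies_rank_two {N : ℕ} (hN : 3 ≤ N)
    (ψ : (Fin N → Fin 2) → ℂ) (hunit : IsUnitState ψ) (hent : IsEntangledState ψ)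
    (k : Fin N) (hfrag : IsSeparableDensity (reducedState ψ ({k} : Finset (Fin N)))) :
    (reducedState ψ ({k} : Finset (Fin N))).rank = 2 := by
  classical
  haveI hUniq : Unique {i : Fin N // i ∈ ({k} : Finset (Fin N))} :=
    { default := ⟨k, Finset.mem_singleton_self k⟩
      uniq := fun a => Subtype.ext (Finset.mem_singleton.mp a.2) }
  set S : Finset (Fin N) := {k} with hS
  set ρ := reducedState ψ S with hρdef
  -- the trace of the reduced state is 1
  have htr : ∑ x, ρ x x = 1 := by
    have h1 : ∑ x, ρ x x
        = ∑ x : {i : Fin N // i ∉ S} → Fin 2, ∑ z : {i : Fin N // i ∈ S} → Fin 2,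
            ((Complex.normSq (ψ (mergeCompl S x z)) : ℝ) : ℂ) := by
      refine Finset.sum_congr rfl fun x _ => ?_
      rw [hρdef]
      simp [reducedState, Complex.mul_conj]
    rw [h1, Finset.sum_comm]
    have h2 := sum_merge S (fun w => Complex.normSq (ψ w))
    norm_cast
    rw [h2]
    exact hunit
  -- upper bound on the rank
  have hub : ρ.rank ≤ 2 := by
    have hfact : ρ = (Matrix.of fun (z : {i : Fin N // i ∈ S} → Fin 2)
          (x : {i : Fin N // i ∉ S} → Fin 2) => conj (ψ (mergeCompl S x z))).conjTranspose
        * (Matrix.of fun (z : {i : Fin N // i ∈ S} → Fin 2)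
          (x : {i : Fin N // i ∉ S} → Fin 2) => conj (ψ (mergeCompl S x z))) := by
      ext x y
      rw [hρdef]
      simp [reducedState, Matrix.mul_apply, Matrix.conjTranspose_apply, Complex.star_def,
        mul_comm]
    calc ρ.rank = (Matrix.of fun (z : {i : Fin N // i ∈ S} → Fin 2)
          (x : {i : Fin N // i ∉ S} → Fin 2) => conj (ψ (mergeCompl S x z))).rank := by
          rw [hfact, Matrix.rank_conjTranspose_mul_self]
      _ ≤ Fintype.card ({i : Fin N // i ∈ S} → Fin 2) := Matrix.rank_le_card_height _
      _ = 2 := by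
          rw [Fintype.card_fun]
          have hc : Fintype.card {i : Fin N // i ∈ S} = 1 := Fintype.card_unique
          rw [hc, Fintype.card_fin, pow_one]
  -- lower bound: rank cannot be ≤ 1
  have hlow : ¬ ρ.rank ≤ 1 := by
    intro hr
    have hherm : ∀ x y, ρ y x = conj (ρ x y) := by
      intro x y
      rw [hρdef]
      simp [reducedState, map_sum, mul_comm]
    obtain ⟨φ, hφn, hφ⟩ := rank_le_one_eq_proj ρ hherm htr hr
    obtain ⟨e, he, heq⟩ := sep_pure_is_prod ρ hfrag φ hφn hφ
    have hun : ∑ x, Complex.normSq (prodState e x) = 1 := sum_normSq_prodState e he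
    have hfac := reduced_factor ψ S (prodState e) hun (by rw [← hρdef]; exact heq)
    set d : Fin 2 → ℂ := fun j =>
      conj (dotc (fun x' => ψ (mergeCompl S x' (fun _ => j))) (prodState e)) with hd
    have hzconst : ∀ z : {i : Fin N // i ∈ S} → Fin 2, z = fun _ => z default := by
      intro z; funext i; rw [Unique.eq_default i]
    -- ψ factorizes
    have hval : ∀ w : Fin N → Fin 2,
        ψ w = d (w k) * ∏ i : {i : Fin N // i ∉ S}, e i (w i) := by
      intro w
      have hw : mergeCompl S (fun i : {i : Fin N // i ∉ S} => w i)
          (fun i : {i : Fin N // i ∈ S} => w i) = w := by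
        funext i
        unfold mergeCompl
        split <;> rfl
      have hz2 : (fun i : {i : Fin N // i ∈ S} => w (i : Fin N)) = fun _ => w k := by
        funext i
        have hik : (i : Fin N) = k := Finset.mem_singleton.mp (hS ▸ i.2)
        rw [hik]
      calc ψ w = ψ (mergeCompl S (fun i => w i) (fun i => w i)) := by rw [hw]
        _ = conj (dotc (fun x' => ψ (mergeCompl S x' (fun i => w i))) (prodState e))
            * prodState e (fun i => w i) := hfac _ _
        _ = d (w k) * ∏ i : {i : Fin N // i ∉ S}, e i (w i) := by
            rw [hz2]
            simp only [hd, prodState]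
    -- the qubit-k factor is a unit qubit
    have hdunit : ∑ j : Fin 2, Complex.normSq (d j) = 1 := by
      have h1 : ∀ z : {i : Fin N // i ∈ S} → Fin 2,
          ∑ x, Complex.normSq (ψ (mergeCompl S x z)) = Complex.normSq (d (z default)) := by
        intro z
        have h3 : ∀ x : {i : Fin N // i ∉ S} → Fin 2,
            Complex.normSq (ψ (mergeCompl S x z))
              = Complex.normSq (d (z default)) * Complex.normSq (prodState e x) := by
          intro x
          conv_lhs => rw [hzconst z]
          rw [show ψ (mergeCompl S x (fun _ => z default))
              = d (z default) * prodState e x from by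
            simp only [hd]
            exact hfac _ x]
          rw [Complex.normSq_mul]
        rw [Finset.sum_congr rfl fun x _ => h3 x, ← Finset.mul_sum, hun, mul_one]
      have h2 := sum_merge S (fun w => Complex.normSq (ψ w))
      rw [Finset.sum_congr rfl fun z _ => h1 z] at h2
      rw [hunit] at h2
      rw [← h2]
      exact Fintype.sum_equiv (Equiv.funUnique {i : Fin N // i ∈ S} (Fin 2)).symm
        (fun j => Complex.normSq (d j))
        (fun z => Complex.normSq (d (z default))) (fun j => rfl)
    -- assemble the product state
    set E : Fin N → Fin 2 → ℂ := fun i =>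
      if h : i = k then d else e ⟨i, by simp only [hS, Finset.mem_singleton]; exact h⟩ with hE
    apply hent
    refine ⟨E, ?_, ?_⟩
    · intro i
      by_cases h : i = k
      · subst h
        simp only [hE, dif_pos]
        exact hdunit
      · simp only [hE, dif_neg h]
        exact he _
    · funext w
      rw [hval w, prodState, Fintype.prod_eq_mul_prod_compl k (fun i => E i (w i))]
      congr 1
      · simp only [hE, dif_pos]
      · rw [Finset.prod_subtype ({k}ᶜ : Finset (Fin N))
          (p := fun i => i ∉ S) (fun i => by simp [hS]) (fun i => E i (w i))]
        refine (Finset.prod_congr rfl fun i _ => ?_).symm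
        have hik : ¬ (i : Fin N) = k := by
          have := i.2
          simp only [hS, Finset.mem_singleton] at this
          exact this
        simp only [hE, dif_neg hik]
  omega
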